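/- Let C be a d-dimensional copula, p ∈ (0, 1/2] and a, b ∈ (0,1)^d with a ≤ b such that Q^C([0,a]) = p = Q^C([b,1]). Define C_{(a)}(u) := (1/p)·Q^C([0,u] ∩ [0,a]), C_{(b)}(u) := (1/p)·Q^C([0,u] ∩ [b,1]), C_{(1)}(u) := (C_{(a)}(u) + C_{(b)}(u))/2, and C_{(2)}(u) := (1/2)·(C_{(a)}(η_1(1,u))·C_{(b)}(η_1(u,1)) + C_{(b)}(η_1(1,u))·C_{(a)}(η_1(u,1))). Then D := C − 2p·C_{(1)} + 2p·C_{(2)} is a d-dimensional copula satisfying D ⪯ C and D ≠ C; in particular, C is not a minimal copula. -/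

import Mathlib

open MeasureTheory unitInterval

/-- The unit cube `[0,1]^d`, modelled as functions `Fin d → [0,1]`. -/
abbrev Cube (d : ℕ) : Type := Fin d → unitInterval

/-- `η_K(u,v)`: the vector whose `k`-th coordinate is `v k` if `k ∈ K` and `u k` otherwise. -/
def etaK {d : ℕ} (K : Finset (Fin d)) (u v : Cube d) : Cube d :=
  fun k => if k ∈ K then v k else u k

/-- `C` is a `d`-dimensional copula. -/
def IsCopula {d : ℕ} (C : Cube d → ℝ) : Prop :=
  (∀ u v : Cube d, u ≤ v →
      0 ≤ ∑ K : Finset (Fin d), (-1 : ℝ) ^ (d - K.card) * C (etaK K u v)) ∧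
  (∀ k : Fin d, ∀ u : Cube d, C (etaK {k} u 0) = 0) ∧
  (∀ k : Fin d, ∀ u : Cube d, C (etaK {k} 1 u) = (u k : ℝ))

/-- The reflection `ν_K`, i.e. the composition of the commuting reflections `ν_k`, `k ∈ K`,
written in closed (inclusion–exclusion) form: the coordinates in `L ⊆ K` are reflected to
`1 - u k`, the remaining coordinates of `K` are set to `1`. -/
noncomputable def nuK {d : ℕ} (K : Finset (Fin d)) (C : Cube d → ℝ) : Cube d → ℝ :=
  fun u => ∑ L ∈ K.powerset, (-1 : ℝ) ^ L.card *
    C (fun k => if k ∈ L then unitInterval.symm (u k) else if k ∈ K then 1 else u k)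

/-- The total reflection `τ = ν_{{1,...,d}}`, sending a copula to its survival copula. -/
noncomputable def survival {d : ℕ} (C : Cube d → ℝ) : Cube d → ℝ := nuK Finset.univ C

/-- The concordance order `C ⪯ D`: `C(u) ≤ D(u)` and `(τ C)(u) ≤ (τ D)(u)` for all `u`. -/
def ConcLE {d : ℕ} (C D : Cube d → ℝ) : Prop :=
  (∀ u, C u ≤ D u) ∧ (∀ u, survival C u ≤ survival D u)

/-- A minimal copula: a minimal element of the set of all copulas w.r.t. concordance order. -/
def IsMinimalCopula {d : ℕ} (C : Cube d → ℝ) : Prop :=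
  IsCopula C ∧ ∀ D : Cube d → ℝ, IsCopula D → ConcLE D C → D = C

/-- `μ` is the copula measure `Q^C` of `C`: a Borel probability measure on the cube
with `μ [0,u] = C u` for all `u`. -/
def IsCopulaMeasure {d : ℕ} (C : Cube d → ℝ) (μ : Measure (Cube d)) : Prop :=
  IsProbabilityMeasure μ ∧ ∀ u : Cube d, μ (Set.Icc 0 u) = ENNReal.ofReal (C u)

/-- `C` is `K`-countermonotonic: there are strictly increasing continuous functions
`g k : [0,1] → ℝ` (`k ∈ K`) and `c : ℝ` with `Q^C {u : ∑ k ∈ K, g k (u k) = c} = 1`. -/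
def IsKCM {d : ℕ} (K : Finset (Fin d)) (C : Cube d → ℝ) : Prop :=
  ∃ (g : Fin d → unitInterval → ℝ) (c : ℝ),
    (∀ k ∈ K, StrictMono (g k) ∧ Continuous (g k)) ∧
    ∃ μ : Measure (Cube d), IsCopulaMeasure C μ ∧
      μ {u : Cube d | ∑ k ∈ K, g k (u k) = c} = 1

/-- `C` is Kendall-countermonotonic (`τ`-CM):
`min (C u) ((τ C)(1 - u)) = 0` for every `u` with `0 < u < 1` coordinatewise. -/
noncomputable def IsTauCM {d : ℕ} (C : Cube d → ℝ) : Prop :=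
  ∀ u : Cube d, (∀ k, 0 < u k ∧ u k < 1) →
    min (C u) (survival C (fun k => unitInterval.symm (u k))) = 0

/-- The upper Fréchet–Hoeffding bound `M(u) = min {u_1, ..., u_d}`. -/
noncomputable def Mcop {d : ℕ} : Cube d → ℝ :=
  fun u => sInf (Set.range fun k => (u k : ℝ))


lemma toReal_inter_add_diff {Ω : Type*} [MeasurableSpace Ω] (ν : Measure Ω) [IsFiniteMeasure ν]
    (s t : Set Ω) (ht : MeasurableSet t) :
    (ν (s ∩ t)).toReal + (ν (s \ t)).toReal = (ν s).toReal := by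
  rw [← ENNReal.toReal_add (measure_ne_top _ _) (measure_ne_top _ _),
    measure_inter_add_diff s ht]

lemma ie {Ω : Type*} [MeasurableSpace Ω] {ι : Type*} [DecidableEq ι]
    (ν : Measure Ω) [IsFiniteMeasure ν]
    (A B : ι → Set Ω) (hA : ∀ i, MeasurableSet (A i)) (hAB : ∀ i, A i ⊆ B i)
    (s : Finset ι) (S : Set Ω) :
    ∑ K ∈ s.powerset, (-1:ℝ)^(s.card - K.card) *
      (ν ((⋂ i ∈ s, if i ∈ K then B i else A i) ∩ S)).toReal
    = (ν ((⋂ i ∈ s, (B i \ A i)) ∩ S)).toReal := by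
  induction s using Finset.induction_on generalizing S with
  | empty => simp
  | @insert j s hj ih =>
    rw [Finset.sum_powerset_insert hj]
    have hcard : (insert j s).card = s.card + 1 := Finset.card_insert_of_notMem hj
    have key : ∀ K ∈ s.powerset,
        (-1:ℝ)^((insert j s).card - K.card) *
          (ν ((⋂ i ∈ insert j s, if i ∈ K then B i else A i) ∩ S)).toReal
        + (-1:ℝ)^((insert j s).card - (insert j K).card) *
          (ν ((⋂ i ∈ insert j s, if i ∈ insert j K then B i else A i) ∩ S)).toReal
        = (-1:ℝ)^(s.card - K.card) *
          (ν ((⋂ i ∈ s, if i ∈ K then B i else A i) ∩ ((B j \ A j) ∩ S))).toReal := by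
      intro K hK
      rw [Finset.mem_powerset] at hK
      have hjK : j ∉ K := fun h => hj (hK h)
      have hKc : K.card ≤ s.card := Finset.card_le_card hK
      have hKins : (insert j K).card = K.card + 1 := Finset.card_insert_of_notMem hjK
      set X : Set Ω := ⋂ i ∈ s, if i ∈ K then B i else A i with hX
      have e1 : (⋂ i ∈ insert j s, if i ∈ K then B i else A i) = A j ∩ X := by
        rw [Finset.set_biInter_insert, if_neg hjK]
      have e2 : (⋂ i ∈ insert j s, if i ∈ insert j K then B i else A i) = B j ∩ X := by
        rw [Finset.set_biInter_insert, if_pos (Finset.mem_insert_self j K)]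
        congr 1
        apply Set.iInter₂_congr
        intro i hi
        have hij : i ≠ j := fun h => hj (h ▸ hi)
        simp [Finset.mem_insert, hij]
      rw [e1, e2, hcard, hKins]
      have hsign : (-1:ℝ)^(s.card + 1 - K.card) = -((-1:ℝ)^(s.card - K.card)) := by
        rw [Nat.succ_sub hKc, pow_succ]; ring
      have hsign2 : s.card + 1 - (K.card + 1) = s.card - K.card := by omega
      rw [hsign, hsign2]
      have h1 := toReal_inter_add_diff ν ((B j ∩ X) ∩ S) (A j) (hA j)
      have e3 : ((B j ∩ X) ∩ S) ∩ A j = (A j ∩ X) ∩ S := by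
        ext w; constructor
        · rintro ⟨⟨⟨_, h2⟩, h3⟩, h4⟩; exact ⟨⟨h4, h2⟩, h3⟩
        · rintro ⟨⟨h1', h2⟩, h3⟩; exact ⟨⟨⟨hAB j h1', h2⟩, h3⟩, h1'⟩
      have e4 : (((B j ∩ X) ∩ S) \ A j) = X ∩ ((B j \ A j) ∩ S) := by
        ext w; constructor
        · rintro ⟨⟨⟨h1', h2⟩, h3⟩, h4⟩; exact ⟨h2, ⟨h1', h4⟩, h3⟩
        · rintro ⟨h2, ⟨h1', h4⟩, h3⟩; exact ⟨⟨⟨h1', h2⟩, h3⟩, h4⟩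
      rw [e3, e4] at h1
      have e5 : B j ∩ X ∩ S = (B j ∩ X) ∩ S := rfl
      have e6 : A j ∩ X ∩ S = (A j ∩ X) ∩ S := rfl
      rw [e5, e6, ← h1]; ring
    calc ∑ K ∈ s.powerset, (-1:ℝ)^((insert j s).card - K.card) *
            (ν ((⋂ i ∈ insert j s, if i ∈ K then B i else A i) ∩ S)).toReal
          + ∑ K ∈ s.powerset, (-1:ℝ)^((insert j s).card - (insert j K).card) *
            (ν ((⋂ i ∈ insert j s, if i ∈ insert j K then B i else A i) ∩ S)).toReal
        = ∑ K ∈ s.powerset, (-1:ℝ)^(s.card - K.card) *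
            (ν ((⋂ i ∈ s, if i ∈ K then B i else A i) ∩ ((B j \ A j) ∩ S))).toReal := by
          rw [← Finset.sum_add_distrib]
          exact Finset.sum_congr rfl key
      _ = (ν ((⋂ i ∈ s, (B i \ A i)) ∩ ((B j \ A j) ∩ S))).toReal := ih _
      _ = (ν ((⋂ i ∈ insert j s, (B i \ A i)) ∩ S)).toReal := by
          rw [Finset.set_biInter_insert]
          congr 2
          ext w
          constructor
          · rintro ⟨h1, h2, h3⟩; exact ⟨⟨h2, h1⟩, h3⟩
          · rintro ⟨⟨h2, h1⟩, h3⟩; exact ⟨h1, h2, h3⟩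

lemma mLe {d : ℕ} (k : Fin d) (c : unitInterval) : MeasurableSet {w : Cube d | w k ≤ c} :=
  measurableSet_le (measurable_pi_apply k) measurable_const

lemma Icc_biInter {d : ℕ} (x : Cube d) :
    Set.Icc (0 : Cube d) x = ⋂ i ∈ (Finset.univ : Finset (Fin d)), {w : Cube d | w i ≤ x i} := by
  ext w
  simp only [Set.mem_Icc, Set.mem_iInter, Set.mem_setOf_eq, Finset.mem_univ, Set.iInter_true]
  constructor
  · rintro ⟨_, h2⟩ k; exact h2 k
  · intro h; exact ⟨fun k => unitInterval.nonneg', fun k => h k⟩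

lemma Icc_single1 {d : ℕ} (k0 : Fin d) (x : Cube d) :
    Set.Icc (0 : Cube d) (etaK {k0} 1 x) = {w : Cube d | w k0 ≤ x k0} := by
  ext w
  simp only [Set.mem_Icc, Set.mem_setOf_eq]
  constructor
  · rintro ⟨_, h2⟩
    have := h2 k0
    simpa [etaK] using this
  · intro h
    refine ⟨fun k => unitInterval.nonneg', fun k => ?_⟩
    by_cases hk : k = k0
    · subst hk; simpa [etaK] using h
    · simp [etaK, hk, unitInterval.le_one']

lemma Icc_single2 {d : ℕ} (k0 : Fin d) (x : Cube d) :
    Set.Icc (0 : Cube d) (etaK {k0} x 1) = ⋂ i ∈ Finset.univ.erase k0, {w : Cube d | w i ≤ x i} := by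
  ext w
  simp only [Set.mem_Icc, Set.mem_iInter, Set.mem_setOf_eq, Finset.mem_erase, Finset.mem_univ,
    and_true]
  constructor
  · rintro ⟨_, h2⟩ i hi
    have := h2 i
    simpa [etaK, hi] using this
  · intro h
    refine ⟨fun k => unitInterval.nonneg', fun k => ?_⟩
    by_cases hk : k = k0
    · subst hk; simp [etaK, unitInterval.le_one']
    · simpa [etaK, hk] using h k hk

lemma biInter_eta {d : ℕ} (s K : Finset (Fin d)) (u v : Cube d) :
    (⋂ i ∈ s, {w : Cube d | w i ≤ (etaK K u v) i})
      = ⋂ i ∈ s, (if i ∈ K then {w : Cube d | w i ≤ v i} else {w : Cube d | w i ≤ u i}) := by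
  apply Set.iInter₂_congr
  intro i _
  by_cases h : i ∈ K <;> simp [etaK, h]

lemma boxT_decomp {d : ℕ} (k0 : Fin d) (u v : Cube d) :
    (⋂ i ∈ (Finset.univ : Finset (Fin d)), ({w : Cube d | w i ≤ v i} \ {w : Cube d | w i ≤ u i}))
    = ({w : Cube d | w k0 ≤ v k0} \ {w : Cube d | w k0 ≤ u k0}) ∩
      ⋂ i ∈ Finset.univ.erase k0, ({w : Cube d | w i ≤ v i} \ {w : Cube d | w i ≤ u i}) := by
  conv_lhs => rw [← Finset.insert_erase (Finset.mem_univ k0)]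
  rw [Finset.set_biInter_insert]

lemma prod_split {d : ℕ} (k0 : Fin d) (F G : Cube d → ℝ)
    (hF : ∀ x y : Cube d, x k0 = y k0 → F x = F y)
    (hG : ∀ x y : Cube d, (∀ i, i ≠ k0 → x i = y i) → G x = G y)
    (u v : Cube d) :
    ∑ K : Finset (Fin d), (-1:ℝ)^(d - K.card) * (F (etaK K u v) * G (etaK K u v))
    = (F v - F u) * ∑ K ∈ (Finset.univ.erase k0).powerset,
        (-1:ℝ)^((Finset.univ.erase k0).card - K.card) * G (etaK K u v) := by
  classical
  set s : Finset (Fin d) := Finset.univ.erase k0 with hs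
  have hk0s : k0 ∉ s := Finset.notMem_erase k0 Finset.univ
  have hscard : s.card + 1 = d := by
    rw [hs, Finset.card_erase_of_mem (Finset.mem_univ k0), Finset.card_univ, Fintype.card_fin]
    have : 0 < d := Fin.pos k0
    omega
  have huniv : (Finset.univ : Finset (Finset (Fin d))) = (insert k0 s).powerset := by
    rw [Finset.insert_erase (Finset.mem_univ k0), Finset.powerset_univ]
  rw [show (∑ K : Finset (Fin d), (-1:ℝ)^(d - K.card) * (F (etaK K u v) * G (etaK K u v)))
      = ∑ K ∈ (insert k0 s).powerset, (-1:ℝ)^(d - K.card) * (F (etaK K u v) * G (etaK K u v))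
    from by rw [← huniv]]
  rw [Finset.sum_powerset_insert hk0s, Finset.mul_sum]
  rw [← Finset.sum_add_distrib]
  apply Finset.sum_congr rfl
  intro K hK
  rw [Finset.mem_powerset] at hK
  have hk0K : k0 ∉ K := fun h => hk0s (hK h)
  have hKc : K.card ≤ s.card := Finset.card_le_card hK
  have hFu : F (etaK K u v) = F u := hF _ _ (by simp [etaK, hk0K])
  have hFv : F (etaK (insert k0 K) u v) = F v :=
    hF _ _ (by simp [etaK, Finset.mem_insert_self])
  have hGi : G (etaK (insert k0 K) u v) = G (etaK K u v) := by
    apply hG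
    intro i hi
    simp only [etaK, Finset.mem_insert]
    have : (i = k0 ∨ i ∈ K) ↔ i ∈ K := by
      constructor
      · rintro (rfl | h); · exact absurd rfl hi
        · exact h
      · exact Or.inr
    rw [if_congr this rfl rfl]
  have hcardins : (insert k0 K).card = K.card + 1 := Finset.card_insert_of_notMem hk0K
  have hsign : (-1:ℝ)^(d - K.card) = -((-1:ℝ)^(s.card - K.card)) := by
    have : d - K.card = (s.card - K.card) + 1 := by omega
    rw [this, pow_succ]; ring
  have hsign2 : d - (insert k0 K).card = s.card - K.card := by
    rw [hcardins]; omega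
  rw [hFu, hFv, hGi, hsign, hsign2]
  ring

lemma abstract_ineq {Ω : Type*} [MeasurableSpace Ω] (μ : Measure Ω) [IsFiniteMeasure μ]
    (p : ℝ) (hp : 0 < p) (X R A B : Set Ω)
    (hRBm : MeasurableSet (R ∩ B))
    (hA : μ A = ENNReal.ofReal p) (hB : μ B = ENNReal.ofReal p)
    (hX : B ∩ X = ∅ ∨ A ⊆ X) (hR : B ∩ R = ∅ ∨ A ⊆ R) :
    (μ (X ∩ A)).toReal * (μ (R ∩ B)).toReal + (μ (X ∩ B)).toReal * (μ (R ∩ A)).toReal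
      ≤ p * ((μ (X ∩ R ∩ A)).toReal + (μ (X ∩ R ∩ B)).toReal) := by
  have hple : ∀ (Z S : Set Ω), μ S = ENNReal.ofReal p → (μ (Z ∩ S)).toReal ≤ p := by
    intro Z S hS
    have h1 : μ (Z ∩ S) ≤ ENNReal.ofReal p := hS ▸ measure_mono Set.inter_subset_right
    calc (μ (Z ∩ S)).toReal ≤ (ENNReal.ofReal p).toReal :=
          ENNReal.toReal_mono ENNReal.ofReal_ne_top h1
      _ = p := ENNReal.toReal_ofReal hp.le
  have hnn : ∀ Z : Set Ω, 0 ≤ (μ Z).toReal := fun Z => ENNReal.toReal_nonneg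
  rcases hX with hX | hX <;> rcases hR with hR | hR
  · have h1 : X ∩ B = ∅ := by rw [Set.inter_comm]; exact hX
    have h2 : R ∩ B = ∅ := by rw [Set.inter_comm]; exact hR
    rw [h1, h2]
    simp only [measure_empty, ENNReal.toReal_zero, mul_zero, zero_mul, add_zero]
    positivity
  · -- B ∩ X = ∅, A ⊆ R
    have h1 : X ∩ B = ∅ := by rw [Set.inter_comm]; exact hX
    have h2 : X ∩ R ∩ A = X ∩ A := by
      ext w; constructor
      · rintro ⟨⟨h3, _⟩, h4⟩; exact ⟨h3, h4⟩
      · rintro ⟨h3, h4⟩; exact ⟨⟨h3, hR h4⟩, h4⟩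
    rw [h1, h2]
    simp only [measure_empty, ENNReal.toReal_zero, zero_mul, add_zero]
    have := hple R B hB
    nlinarith [hnn (X ∩ A), hnn (X ∩ R ∩ B), hnn (R ∩ B)]
  · -- A ⊆ X, B ∩ R = ∅
    have h1 : R ∩ B = ∅ := by rw [Set.inter_comm]; exact hR
    have h2 : X ∩ R ∩ A = R ∩ A := by
      ext w; constructor
      · rintro ⟨⟨_, h3⟩, h4⟩; exact ⟨h3, h4⟩
      · rintro ⟨h3, h4⟩; exact ⟨⟨hX h4, h3⟩, h4⟩
    have h3 : X ∩ R ∩ B = ∅ := by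
      rw [Set.inter_assoc, h1, Set.inter_empty]
    rw [h1, h2, h3]
    simp only [measure_empty, ENNReal.toReal_zero, mul_zero, zero_add, add_zero]
    have := hple X B hB
    nlinarith [hnn (R ∩ A), hnn (X ∩ B)]
  · -- A ⊆ X, A ⊆ R
    have hXA : X ∩ A = A := Set.inter_eq_right.2 hX
    have hRA : R ∩ A = A := Set.inter_eq_right.2 hR
    have hTA : X ∩ R ∩ A = A := by
      rw [Set.inter_assoc, hRA, hXA]
    have hATR : (μ A).toReal = p := by rw [hA, ENNReal.toReal_ofReal hp.le]
    rw [hXA, hRA, hTA]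
    have key : (μ (X ∩ B)).toReal + (μ (R ∩ B)).toReal
        ≤ p + (μ (X ∩ R ∩ B)).toReal := by
      have h4 := measure_union_add_inter (μ := μ) (X ∩ B) hRBm
      have h5 : (X ∩ B) ∩ (R ∩ B) = X ∩ R ∩ B := by
        ext w; constructor
        · rintro ⟨⟨h6, h7⟩, h8, _⟩; exact ⟨⟨h6, h8⟩, h7⟩
        · rintro ⟨⟨h6, h8⟩, h7⟩; exact ⟨⟨h6, h7⟩, h8, h7⟩
      rw [h5] at h4
      have h6 : (μ ((X ∩ B) ∪ (R ∩ B))).toReal ≤ p := by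
        have h7 : μ ((X ∩ B) ∪ (R ∩ B)) ≤ ENNReal.ofReal p := by
          rw [← hB]
          exact measure_mono (Set.union_subset Set.inter_subset_right Set.inter_subset_right)
        calc (μ ((X ∩ B) ∪ (R ∩ B))).toReal ≤ (ENNReal.ofReal p).toReal :=
              ENNReal.toReal_mono ENNReal.ofReal_ne_top h7
          _ = p := ENNReal.toReal_ofReal hp.le
      have h8 : (μ ((X ∩ B) ∪ (R ∩ B))).toReal + (μ (X ∩ R ∩ B)).toReal
          = (μ (X ∩ B)).toReal + (μ (R ∩ B)).toReal := by
        rw [← ENNReal.toReal_add (measure_ne_top _ _) (measure_ne_top _ _), h4,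
          ENNReal.toReal_add (measure_ne_top _ _) (measure_ne_top _ _)]
      linarith
    nlinarith [hnn (X ∩ B), hnn (R ∩ B), hATR]
def boxT {d : ℕ} (u v : Cube d) : Set (Cube d) :=
  ⋂ i ∈ (Finset.univ : Finset (Fin d)), ({w : Cube d | w i ≤ v i} \ {w : Cube d | w i ≤ u i})

def boxR {d : ℕ} (k0 : Fin d) (u v : Cube d) : Set (Cube d) :=
  ⋂ i ∈ Finset.univ.erase k0, ({w : Cube d | w i ≤ v i} \ {w : Cube d | w i ≤ u i})

def lowR {d : ℕ} (k0 : Fin d) (u : Cube d) : Set (Cube d) :=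
  ⋂ i ∈ Finset.univ.erase k0, {w : Cube d | w i ≤ u i}

lemma boxT_meas {d : ℕ} (u v : Cube d) : MeasurableSet (boxT u v) :=
  Finset.measurableSet_biInter _ fun i _ => (mLe i (v i)).diff (mLe i (u i))

lemma boxR_meas {d : ℕ} (k0 : Fin d) (u v : Cube d) : MeasurableSet (boxR k0 u v) :=
  Finset.measurableSet_biInter _ fun i _ => (mLe i (v i)).diff (mLe i (u i))

lemma lowR_meas {d : ℕ} (k0 : Fin d) (u : Cube d) : MeasurableSet (lowR k0 u) :=
  Finset.measurableSet_biInter _ fun i _ => mLe i (u i)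

lemma boxT_decomp' {d : ℕ} (k0 : Fin d) (u v : Cube d) :
    boxT u v = ({w : Cube d | w k0 ≤ v k0} \ {w : Cube d | w k0 ≤ u k0}) ∩ boxR k0 u v :=
  boxT_decomp k0 u v

lemma low_decomp {d : ℕ} (k0 : Fin d) (u : Cube d) :
    Set.Icc (0 : Cube d) u = {w : Cube d | w k0 ≤ u k0} ∩ lowR k0 u := by
  rw [Icc_biInter u]
  conv_lhs => rw [← Finset.insert_erase (Finset.mem_univ k0)]
  rw [Finset.set_biInter_insert]
  rfl

lemma arith1 (p x1 yR y1 xR xT yT : ℝ) (hp : 0 < p) (h : x1*yR + y1*xR ≤ p*(xT+yT)) :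
    ((1/p)*x1 * ((1/p)*yR) + (1/p)*y1 * ((1/p)*xR))/2 ≤ ((1/p)*xT + (1/p)*yT)/2 := by
  have hpne : p ≠ 0 := ne_of_gt hp
  have key : ((1/p)*xT + (1/p)*yT)/2 - ((1/p)*x1 * ((1/p)*yR) + (1/p)*y1 * ((1/p)*xR))/2
      = (p*(xT+yT) - (x1*yR + y1*xR)) / (2*p^2) := by
    field_simp
  have h2 : (0:ℝ) ≤ (p*(xT+yT) - (x1*yR + y1*xR)) / (2*p^2) :=
    div_nonneg (by linarith) (by positivity)
  linarith

lemma arith2 (p L M : ℝ) (hp : 0 < p) (h : L ≤ p * M) : (1/p) * L ≤ M := by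
  have h2 := mul_le_mul_of_nonneg_left h (le_of_lt (by positivity : (0:ℝ) < 1/p))
  calc (1/p) * L ≤ (1/p) * (p * M) := h2
    _ = M := by field_simp

lemma arith3 (p m x : ℝ) (hp : p ≠ 0) (h : m + x = p) : 1 - (1/p)*m = (1/p)*x := by
  field_simp
  linarith

lemma nuK_univ_eq {d : ℕ} (G : Cube d → ℝ) (u : Cube d) :
    survival G u
      = ∑ K : Finset (Fin d), (-1:ℝ)^(d - K.card) * G (etaK K (fun k => symm (u k)) 1) := by
  classical
  unfold survival nuK
  rw [Finset.powerset_univ]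
  apply Fintype.sum_bijective compl (Function.Involutive.bijective (fun K => compl_compl K))
  intro L
  have h1 : (Lᶜ : Finset (Fin d)).card = Fintype.card (Fin d) - L.card := Finset.card_compl L
  have h2 : d - (Lᶜ : Finset (Fin d)).card = L.card := by
    rw [h1, Fintype.card_fin]
    have := Finset.card_le_univ L
    rw [Fintype.card_fin] at this
    omega
  rw [h2]
  have harg : (fun k => if k ∈ L then unitInterval.symm (u k)
        else if k ∈ Finset.univ then 1 else u k)
      = etaK Lᶜ (fun k => unitInterval.symm (u k)) 1 := by
    funext k
    by_cases h : k ∈ L <;> simp [etaK, Finset.mem_compl, h, Pi.one_apply]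
  rw [harg]

set_option maxHeartbeats 1000000 in
/-- The key construction behind the main theorem: from `p ∈ (0,1/2]`, `a ≤ b` in the open
cube with `Q^C [0,a] = p = Q^C [b,1]`, the function
`D = C - 2p·C_{(1,a,b)} + 2p·C_{(2,a,b)}` is a copula with `D ⪯ C` and `D ≠ C`;
in particular `C` is not a minimal copula. -/
theorem stmt19 (d : ℕ) (hd : 2 ≤ d) (C : Cube d → ℝ) (hC : IsCopula C)
    (μ : Measure (Cube d)) (hμ : IsCopulaMeasure C μ)
    (p : ℝ) (hp : p ∈ Set.Ioc (0 : ℝ) (1 / 2))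
    (a b : Cube d) (ha : ∀ k, 0 < a k ∧ a k < 1) (hb : ∀ k, 0 < b k ∧ b k < 1)
    (hab : a ≤ b)
    (hpa : μ (Set.Icc 0 a) = ENNReal.ofReal p) (hpb : μ (Set.Icc b 1) = ENNReal.ofReal p)
    (Ca Cb C1 C2 D : Cube d → ℝ)
    (hCa : ∀ u : Cube d, Ca u = (1 / p) * (μ (Set.Icc 0 u ∩ Set.Icc 0 a)).toReal)
    (hCb : ∀ u : Cube d, Cb u = (1 / p) * (μ (Set.Icc 0 u ∩ Set.Icc b 1)).toReal)
    (hC1 : ∀ u : Cube d, C1 u = (Ca u + Cb u) / 2)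
    (hC2 : ∀ u : Cube d, C2 u =
      (Ca (etaK {(⟨0, by omega⟩ : Fin d)} 1 u) * Cb (etaK {(⟨0, by omega⟩ : Fin d)} u 1) +
       Cb (etaK {(⟨0, by omega⟩ : Fin d)} 1 u) * Ca (etaK {(⟨0, by omega⟩ : Fin d)} u 1)) / 2)
    (hD : ∀ u : Cube d, D u = C u - 2 * p * C1 u + 2 * p * C2 u) :
    IsCopula D ∧ ConcLE D C ∧ D ≠ C ∧ ¬ IsMinimalCopula C := by
  classical
  obtain ⟨hp0, hp2⟩ := hp
  obtain ⟨hprob, hcm⟩ := hμ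
  haveI : IsProbabilityMeasure μ := hprob
  obtain ⟨hCinc, hCgr, hCmar⟩ := hC
  have hd0 : 0 < d := by omega
  set k0 : Fin d := ⟨0, by omega⟩ with hk0def
  -- basic facts
  have hC0 : ∀ (x : Cube d) (k : Fin d), x k = 0 → C x = 0 := by
    intro x k hk
    have h := hCgr k x
    have hx : etaK {k} x 0 = x := by
      funext j
      by_cases hj : j = k
      · subst hj; simp [etaK, hk]
      · simp [etaK, hj]
    rw [hx] at h
    exact h
  have hCnn : ∀ x : Cube d, 0 ≤ C x := by
    intro x
    have h := hCinc 0 x (fun k => unitInterval.nonneg')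
    have hsum : ∑ K : Finset (Fin d), (-1:ℝ)^(d - K.card) * C (etaK K 0 x) = C x := by
      rw [Finset.sum_eq_single Finset.univ]
      · have h1 : etaK Finset.univ (0 : Cube d) x = x := by
          funext j; simp [etaK]
        rw [h1, Finset.card_univ, Fintype.card_fin, Nat.sub_self, pow_zero, one_mul]
      · intro K _ hKne
        have : ∃ k, k ∉ K := by
          by_contra hcon
          push_neg at hcon
          exact hKne (Finset.eq_univ_iff_forall.2 hcon)
        obtain ⟨k, hk⟩ := this
        have : C (etaK K 0 x) = 0 := by
          apply hC0 _ k
          simp [etaK, hk, Pi.zero_apply]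
        rw [this, mul_zero]
      · intro hcon
        exact absurd (Finset.mem_univ _) hcon
    rw [hsum] at h
    exact h
  have hCto : ∀ x : Cube d, C x = (μ (Set.Icc 0 x)).toReal := by
    intro x
    rw [hcm x, ENNReal.toReal_ofReal (hCnn x)]
  have hmarg : ∀ (k : Fin d) (t : unitInterval),
      μ {w : Cube d | w k ≤ t} = ENNReal.ofReal (t:ℝ) := by
    intro k t
    have h1 := hCmar k (fun _ => t)
    have h2 := hcm (etaK {k} 1 (fun _ => t))
    rw [Icc_single1 k (fun _ => t)] at h2
    rw [h2, h1]
  have hplane : ∀ (k : Fin d) (c : unitInterval), 0 < (c:ℝ) → μ {w : Cube d | w k = c} = 0 := by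
    intro k c hc
    have hPm : MeasurableSet {w : Cube d | w k = c} := by
      have : {w : Cube d | w k = c} = {w : Cube d | w k ≤ c} ∩ {w : Cube d | c ≤ w k} := by
        ext w; simp only [Set.mem_setOf_eq, Set.mem_inter_iff]
        constructor
        · intro h; exact ⟨le_of_eq h, le_of_eq h.symm⟩
        · intro ⟨h1, h2⟩; exact le_antisymm h1 h2
      rw [this]
      exact (mLe k c).inter (measurableSet_le measurable_const (measurable_pi_apply k))
    have key : ∀ ε : ℝ, 0 < ε → μ {w : Cube d | w k = c} ≤ ENNReal.ofReal ε := by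
      intro ε hε
      set t : unitInterval := ⟨max 0 ((c:ℝ) - ε), by
        constructor
        · exact le_max_left _ _
        · exact max_le zero_le_one (by linarith [c.2.2])⟩ with htdef
      have htc : (t:ℝ) < c := max_lt hc (by linarith)
      have hdisj : Disjoint {w : Cube d | w k ≤ t} {w : Cube d | w k = c} := by
        rw [Set.disjoint_left]
        intro w h1 h2
        rw [Set.mem_setOf_eq] at h1 h2
        have h3 : (w k : ℝ) ≤ t := h1
        rw [h2] at h3
        linarith
      have hsub : {w : Cube d | w k ≤ t} ∪ {w : Cube d | w k = c} ⊆ {w : Cube d | w k ≤ c} := by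
        intro w hw
        rcases hw with hw | hw
        · exact le_trans hw (Subtype.coe_le_coe.1 htc.le)
        · exact le_of_eq hw
      have h4 : μ {w : Cube d | w k ≤ t} + μ {w : Cube d | w k = c}
          ≤ ENNReal.ofReal (c:ℝ) := by
        rw [← measure_union hdisj hPm, ← hmarg k c]
        exact measure_mono hsub
      rw [hmarg k t] at h4
      have h5 : μ {w : Cube d | w k = c} ≤ ENNReal.ofReal (c:ℝ) - ENNReal.ofReal (t:ℝ) :=
        ENNReal.le_sub_of_add_le_left ENNReal.ofReal_ne_top h4
      have h6 : ENNReal.ofReal (c:ℝ) - ENNReal.ofReal (t:ℝ) = ENNReal.ofReal ((c:ℝ) - t) :=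
        (ENNReal.ofReal_sub _ unitInterval.nonneg').symm
      rw [h6] at h5
      apply le_trans h5
      apply ENNReal.ofReal_le_ofReal
      have ht' : (t:ℝ) = max 0 ((c:ℝ) - ε) := rfl
      rw [ht']
      rcases le_total ((c:ℝ) - ε) 0 with hm | hm
      · rw [max_eq_left hm]; linarith
      · rw [max_eq_right hm]; linarith
    by_contra hne
    have hpos : 0 < (μ {w : Cube d | w k = c}).toReal :=
      ENNReal.toReal_pos hne (measure_ne_top _ _)
    have := key ((μ {w : Cube d | w k = c}).toReal / 2) (by linarith)
    have h7 := ENNReal.toReal_mono ENNReal.ofReal_ne_top this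
    rw [ENNReal.toReal_ofReal (by linarith)] at h7
    linarith
  have hAmeas : MeasurableSet (Set.Icc (0:Cube d) a) := by
    rw [Icc_biInter]
    exact Finset.measurableSet_biInter _ fun i _ => mLe i (a i)
  have hBeq : Set.Icc b (1:Cube d) = ⋂ i ∈ (Finset.univ : Finset (Fin d)), {w : Cube d | b i ≤ w i} := by
    ext w
    simp only [Set.mem_Icc, Set.mem_iInter, Set.mem_setOf_eq, Finset.mem_univ, Set.iInter_true]
    constructor
    · rintro ⟨h1, _⟩ k; exact h1 k
    · intro h; exact ⟨fun k => h k, fun k => unitInterval.le_one'⟩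
  have hBmeas : MeasurableSet (Set.Icc b (1:Cube d)) := by
    rw [hBeq]
    exact Finset.measurableSet_biInter _ fun i _ =>
      measurableSet_le measurable_const (measurable_pi_apply i)
  have hover : μ (Set.Icc (0:Cube d) a ∩ Set.Icc b 1) = 0 := by
    refine measure_mono_null ?_ (hplane k0 (a k0) (ha k0).1)
    · rintro w ⟨h1, h2⟩
      have h3 : (w k0 : ℝ) ≤ a k0 := Subtype.coe_le_coe.2 (h1.2 k0)
      have h4 : (b k0 : ℝ) ≤ w k0 := Subtype.coe_le_coe.2 (h2.1 k0)
      have h5 : (a k0 : ℝ) ≤ b k0 := Subtype.coe_le_coe.2 (hab k0)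
      have : (w k0 : ℝ) = a k0 := le_antisymm h3 (by linarith)
      exact Subtype.coe_injective this
  have hple : ∀ (Z S : Set (Cube d)), μ S = ENNReal.ofReal p → (μ (Z ∩ S)).toReal ≤ p := by
    intro Z S hS
    have h1 : μ (Z ∩ S) ≤ ENNReal.ofReal p := hS ▸ measure_mono Set.inter_subset_right
    calc (μ (Z ∩ S)).toReal ≤ (ENNReal.ofReal p).toReal :=
          ENNReal.toReal_mono ENNReal.ofReal_ne_top h1
      _ = p := ENNReal.toReal_ofReal hp0.le
  have hIcc1 : Set.Icc (0:Cube d) 1 = Set.univ := by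
    ext w
    simp only [Set.mem_Icc, Set.mem_univ, iff_true]
    exact ⟨fun k => unitInterval.nonneg', fun k => unitInterval.le_one'⟩
  have hCa1 : Ca 1 = 1 := by
    rw [hCa, hIcc1, Set.univ_inter, hpa, ENNReal.toReal_ofReal hp0.le]
    field_simp
  have hCb1 : Cb 1 = 1 := by
    rw [hCb, hIcc1, Set.univ_inter, hpb, ENNReal.toReal_ofReal hp0.le]
    field_simp
  have hIccZ : ∀ (x : Cube d) (k : Fin d) (S : Set (Cube d)), x k = 0 →
      μ (Set.Icc 0 x ∩ S) = 0 := by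
    intro x k S hk
    refine measure_mono_null ?_ (by rw [hmarg k 0]; simp)
    rintro w ⟨h1, _⟩
    have := h1.2 k
    rwa [hk] at this
  have hCaZ : ∀ (x : Cube d) (k : Fin d), x k = 0 → Ca x = 0 := by
    intro x k hk
    rw [hCa, hIccZ x k _ hk]
    simp
  have hCbZ : ∀ (x : Cube d) (k : Fin d), x k = 0 → Cb x = 0 := by
    intro x k hk
    rw [hCb, hIccZ x k _ hk]
    simp
  -- sum machinery
  have SC : ∀ (S : Set (Cube d)) (u v : Cube d), u ≤ v →
      ∑ K : Finset (Fin d), (-1:ℝ)^(d - K.card) * (μ (Set.Icc 0 (etaK K u v) ∩ S)).toReal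
        = (μ (boxT u v ∩ S)).toReal := by
    intro S u v huv
    have key := ie μ (fun i => {w : Cube d | w i ≤ u i}) (fun i => {w : Cube d | w i ≤ v i})
      (fun i => mLe i (u i)) (fun i w hw => le_trans hw (huv i)) Finset.univ S
    rw [Finset.powerset_univ] at key
    unfold boxT
    rw [← key]
    apply Finset.sum_congr rfl
    intro K _
    congr 2
    · rw [Finset.card_univ, Fintype.card_fin]
    · rw [Icc_biInter, biInter_eta]
  have SR : ∀ (S : Set (Cube d)) (u v : Cube d), u ≤ v →
      ∑ K ∈ (Finset.univ.erase k0).powerset,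
          (-1:ℝ)^((Finset.univ.erase k0).card - K.card) *
            (μ (Set.Icc 0 (etaK {k0} (etaK K u v) 1) ∩ S)).toReal
        = (μ (boxR k0 u v ∩ S)).toReal := by
    intro S u v huv
    have key := ie μ (fun i => {w : Cube d | w i ≤ u i}) (fun i => {w : Cube d | w i ≤ v i})
      (fun i => mLe i (u i)) (fun i w hw => le_trans hw (huv i)) (Finset.univ.erase k0) S
    unfold boxR
    rw [← key]
    apply Finset.sum_congr rfl
    intro K _
    congr 2
    rw [Icc_single2, biInter_eta]
  have hpne : p ≠ 0 := ne_of_gt hp0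
  have hFa : ∀ x y : Cube d, x k0 = y k0 → Ca (etaK {k0} 1 x) = Ca (etaK {k0} 1 y) := by
    intro x y hxy
    congr 1
    funext j
    by_cases hj : j = k0
    · subst hj; simp [etaK, hxy]
    · simp [etaK, hj]
  have hFb : ∀ x y : Cube d, x k0 = y k0 → Cb (etaK {k0} 1 x) = Cb (etaK {k0} 1 y) := by
    intro x y hxy
    congr 1
    funext j
    by_cases hj : j = k0
    · subst hj; simp [etaK, hxy]
    · simp [etaK, hj]
  have hGa : ∀ x y : Cube d, (∀ i, i ≠ k0 → x i = y i) → Ca (etaK {k0} x 1) = Ca (etaK {k0} y 1) := by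
    intro x y hxy
    congr 1
    funext j
    by_cases hj : j = k0
    · subst hj; simp [etaK]
    · simp [etaK, hj, hxy j hj]
  have hGb : ∀ x y : Cube d, (∀ i, i ≠ k0 → x i = y i) → Cb (etaK {k0} x 1) = Cb (etaK {k0} y 1) := by
    intro x y hxy
    congr 1
    funext j
    by_cases hj : j = k0
    · subst hj; simp [etaK]
    · simp [etaK, hj, hxy j hj]
  have SD' : ∀ u v : Cube d, u ≤ v →
      ∑ K : Finset (Fin d), (-1:ℝ)^(d - K.card) * D (etaK K u v)
      = (∑ K : Finset (Fin d), (-1:ℝ)^(d - K.card) * C (etaK K u v))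
        - (μ (boxT u v ∩ Set.Icc 0 a)).toReal
        - (μ (boxT u v ∩ Set.Icc b 1)).toReal
        + (Ca (etaK {k0} 1 v) - Ca (etaK {k0} 1 u)) * (μ (boxR k0 u v ∩ Set.Icc b 1)).toReal
        + (Cb (etaK {k0} 1 v) - Cb (etaK {k0} 1 u)) * (μ (boxR k0 u v ∩ Set.Icc 0 a)).toReal := by
    intro u v huv
    have hGsumB : ∑ K ∈ (Finset.univ.erase k0).powerset,
        (-1:ℝ)^((Finset.univ.erase k0).card - K.card) * Cb (etaK {k0} (etaK K u v) 1)
        = (1/p) * (μ (boxR k0 u v ∩ Set.Icc b 1)).toReal := by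
      rw [← SR (Set.Icc b 1) u v huv, Finset.mul_sum]
      apply Finset.sum_congr rfl
      intro K _
      rw [hCb]
      ring
    have hGsumA : ∑ K ∈ (Finset.univ.erase k0).powerset,
        (-1:ℝ)^((Finset.univ.erase k0).card - K.card) * Ca (etaK {k0} (etaK K u v) 1)
        = (1/p) * (μ (boxR k0 u v ∩ Set.Icc 0 a)).toReal := by
      rw [← SR (Set.Icc 0 a) u v huv, Finset.mul_sum]
      apply Finset.sum_congr rfl
      intro K _
      rw [hCa]
      ring
    have hCsumA : ∑ K : Finset (Fin d), (-1:ℝ)^(d - K.card) * Ca (etaK K u v)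
        = (1/p) * (μ (boxT u v ∩ Set.Icc 0 a)).toReal := by
      rw [← SC (Set.Icc 0 a) u v huv, Finset.mul_sum]
      apply Finset.sum_congr rfl
      intro K _
      rw [hCa]
      ring
    have hCsumB : ∑ K : Finset (Fin d), (-1:ℝ)^(d - K.card) * Cb (etaK K u v)
        = (1/p) * (μ (boxT u v ∩ Set.Icc b 1)).toReal := by
      rw [← SC (Set.Icc b 1) u v huv, Finset.mul_sum]
      apply Finset.sum_congr rfl
      intro K _
      rw [hCb]
      ring
    have habA := prod_split k0 (fun x => Ca (etaK {k0} 1 x)) (fun x => Cb (etaK {k0} x 1))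
      hFa hGb u v
    have habB := prod_split k0 (fun x => Cb (etaK {k0} 1 x)) (fun x => Ca (etaK {k0} x 1))
      hFb hGa u v
    calc ∑ K : Finset (Fin d), (-1:ℝ)^(d - K.card) * D (etaK K u v)
        = ∑ K : Finset (Fin d),
            ((-1:ℝ)^(d - K.card) * C (etaK K u v)
              - p * ((-1:ℝ)^(d - K.card) * Ca (etaK K u v))
              - p * ((-1:ℝ)^(d - K.card) * Cb (etaK K u v))
              + p * ((-1:ℝ)^(d - K.card) *
                  (Ca (etaK {k0} 1 (etaK K u v)) * Cb (etaK {k0} (etaK K u v) 1)))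
              + p * ((-1:ℝ)^(d - K.card) *
                  (Cb (etaK {k0} 1 (etaK K u v)) * Ca (etaK {k0} (etaK K u v) 1)))) := by
          apply Finset.sum_congr rfl
          intro K _
          rw [hD, hC1, hC2]
          ring
      _ = (∑ K : Finset (Fin d), (-1:ℝ)^(d - K.card) * C (etaK K u v))
            - p * (∑ K : Finset (Fin d), (-1:ℝ)^(d - K.card) * Ca (etaK K u v))
            - p * (∑ K : Finset (Fin d), (-1:ℝ)^(d - K.card) * Cb (etaK K u v))
            + p * (∑ K : Finset (Fin d), (-1:ℝ)^(d - K.card) *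
                (Ca (etaK {k0} 1 (etaK K u v)) * Cb (etaK {k0} (etaK K u v) 1)))
            + p * (∑ K : Finset (Fin d), (-1:ℝ)^(d - K.card) *
                (Cb (etaK {k0} 1 (etaK K u v)) * Ca (etaK {k0} (etaK K u v) 1))) := by
          simp only [Finset.sum_add_distrib, Finset.sum_sub_distrib, ← Finset.mul_sum]
      _ = (∑ K : Finset (Fin d), (-1:ℝ)^(d - K.card) * C (etaK K u v))
            - (μ (boxT u v ∩ Set.Icc 0 a)).toReal
            - (μ (boxT u v ∩ Set.Icc b 1)).toReal
            + (Ca (etaK {k0} 1 v) - Ca (etaK {k0} 1 u)) * (μ (boxR k0 u v ∩ Set.Icc b 1)).toReal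
            + (Cb (etaK {k0} 1 v) - Cb (etaK {k0} 1 u)) *
                (μ (boxR k0 u v ∩ Set.Icc 0 a)).toReal := by
          rw [hCsumA, hCsumB, habA, habB, hGsumA, hGsumB]
          field_simp
  have hCam : ∀ x y : Cube d, x ≤ y → Ca x ≤ Ca y := by
    intro x y hxy
    rw [hCa, hCa]
    have h1 : μ (Set.Icc 0 x ∩ Set.Icc 0 a) ≤ μ (Set.Icc 0 y ∩ Set.Icc 0 a) :=
      measure_mono (Set.inter_subset_inter_left _ (Set.Icc_subset_Icc_right hxy))
    have h2 := ENNReal.toReal_mono (measure_ne_top μ _) h1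
    have h3 : (0:ℝ) ≤ 1/p := by positivity
    exact mul_le_mul_of_nonneg_left h2 h3
  have hCbm : ∀ x y : Cube d, x ≤ y → Cb x ≤ Cb y := by
    intro x y hxy
    rw [hCb, hCb]
    have h1 : μ (Set.Icc 0 x ∩ Set.Icc b 1) ≤ μ (Set.Icc 0 y ∩ Set.Icc b 1) :=
      measure_mono (Set.inter_subset_inter_left _ (Set.Icc_subset_Icc_right hxy))
    have h2 := ENNReal.toReal_mono (measure_ne_top μ _) h1
    have h3 : (0:ℝ) ≤ 1/p := by positivity
    exact mul_le_mul_of_nonneg_left h2 h3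
  have hetale : ∀ u v : Cube d, u ≤ v → etaK {k0} 1 u ≤ etaK {k0} 1 v := by
    intro u v huv j
    by_cases hj : j ∈ ({k0} : Finset (Fin d))
    · simp only [etaK, if_pos hj]; exact huv j
    · simp only [etaK, if_neg hj]
      exact le_refl _
  have cond1 : ∀ u v : Cube d, u ≤ v →
      0 ≤ ∑ K : Finset (Fin d), (-1:ℝ)^(d - K.card) * D (etaK K u v) := by
    intro u v huv
    rw [SD' u v huv]
    have hSC : ∑ K : Finset (Fin d), (-1:ℝ)^(d - K.card) * C (etaK K u v)
        = (μ (boxT u v)).toReal := by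
      have h0 := SC Set.univ u v huv
      rw [Set.inter_univ] at h0
      rw [← h0]
      apply Finset.sum_congr rfl
      intro K _
      rw [Set.inter_univ, ← hCto]
    rw [hSC]
    have key1 : (μ (boxT u v ∩ Set.Icc 0 a)).toReal + (μ (boxT u v ∩ Set.Icc b 1)).toReal
        ≤ (μ (boxT u v)).toReal := by
      set X := boxT u v ∩ Set.Icc 0 a with hX
      set Y := boxT u v ∩ Set.Icc b 1 with hY
      have hm := measure_union_add_inter (μ := μ) X ((boxT_meas u v).inter hBmeas)
      have hz : μ (X ∩ Y) = 0 := by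
        apply measure_mono_null ?_ hover
        rintro w ⟨⟨_, h1⟩, _, h2⟩
        exact ⟨h1, h2⟩
      have hsub1 : X ∪ Y ⊆ boxT u v :=
        Set.union_subset Set.inter_subset_left Set.inter_subset_left
      have hEN : μ X + μ Y ≤ μ (boxT u v) := by
        calc μ X + μ Y = μ (X ∪ Y) + μ (X ∩ Y) := hm.symm
          _ = μ (X ∪ Y) := by rw [hz, add_zero]
          _ ≤ μ (boxT u v) := measure_mono hsub1
      rw [← ENNReal.toReal_add (measure_ne_top μ _) (measure_ne_top μ _)]
      exact ENNReal.toReal_mono (measure_ne_top μ _) hEN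
    have hd1 : 0 ≤ Ca (etaK {k0} 1 v) - Ca (etaK {k0} 1 u) :=
      sub_nonneg.2 (hCam _ _ (hetale u v huv))
    have hd2 : 0 ≤ Cb (etaK {k0} 1 v) - Cb (etaK {k0} 1 u) :=
      sub_nonneg.2 (hCbm _ _ (hetale u v huv))
    have hm1 : (0:ℝ) ≤ (μ (boxR k0 u v ∩ Set.Icc b 1)).toReal := ENNReal.toReal_nonneg
    have hm2 : (0:ℝ) ≤ (μ (boxR k0 u v ∩ Set.Icc 0 a)).toReal := ENNReal.toReal_nonneg
    have hp1 := mul_nonneg hd1 hm1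
    have hp2 := mul_nonneg hd2 hm2
    linarith
  have cond2 : ∀ (k : Fin d) (u : Cube d), D (etaK {k} u 0) = 0 := by
    intro k u
    have hpt : (etaK {k} u 0) k = 0 := by simp [etaK]
    have hCa0 : Ca (etaK {k} u 0) = 0 := hCaZ _ k hpt
    have hCb0 : Cb (etaK {k} u 0) = 0 := hCbZ _ k hpt
    have hC2z : C2 (etaK {k} u 0) = 0 := by
      rw [hC2]
      by_cases hk : k = k0
      · have h1 : (etaK {k0} 1 (etaK {k} u 0)) k0 = 0 := by simp [etaK, hk]
        rw [hCaZ _ k0 h1, hCbZ _ k0 h1]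
        ring
      · have h1 : (etaK {k0} (etaK {k} u 0) 1) k = 0 := by simp [etaK, hk]
        rw [hCaZ _ k h1, hCbZ _ k h1]
        ring
    rw [hD, hC1, hCgr k u, hCa0, hCb0, hC2z]
    ring
  have cond3 : ∀ (k : Fin d) (u : Cube d), D (etaK {k} 1 u) = (u k : ℝ) := by
    intro k u
    have heq : C2 (etaK {k} 1 u) = C1 (etaK {k} 1 u) := by
      rw [hC1, hC2]
      by_cases hk : k = k0
      · have e1 : etaK {k0} 1 (etaK {k} 1 u) = etaK {k} 1 u := by
          funext j
          by_cases hj : j = k0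
          · simp [etaK, hj, hk]
          · simp [etaK, hj, hk]
        have e2 : etaK {k0} (etaK {k} 1 u) 1 = 1 := by
          funext j
          by_cases hj : j = k0
          · simp [etaK, hj, hk]
          · simp [etaK, hj, hk]
        rw [e1, e2, hCa1, hCb1]
        ring
      · have e1 : etaK {k0} 1 (etaK {k} 1 u) = 1 := by
          funext j
          by_cases hj : j = k0
          · simp [etaK, hj, Ne.symm hk]
          · simp [etaK, hj]
        have e2 : etaK {k0} (etaK {k} 1 u) 1 = etaK {k} 1 u := by
          funext j
          by_cases hj : j = k0
          · simp [etaK, hj, Ne.symm hk]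
          · simp [etaK, hj]
        rw [e1, e2, hCa1, hCb1]
        ring
    rw [hD, heq, hC1, hCmar k u]
    ring
  have hcopD : IsCopula D := ⟨cond1, cond2, cond3⟩
  have hptle : ∀ u : Cube d, D u ≤ C u := by
    intro u
    have hkey : C2 u ≤ C1 u := by
      rw [hC1, hC2]
      have r1 : Ca (etaK {k0} 1 u)
          = (1/p) * (μ ({w : Cube d | w k0 ≤ u k0} ∩ Set.Icc 0 a)).toReal := by
        rw [hCa, Icc_single1]
      have r2 : Cb (etaK {k0} 1 u)
          = (1/p) * (μ ({w : Cube d | w k0 ≤ u k0} ∩ Set.Icc b 1)).toReal := by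
        rw [hCb, Icc_single1]
      have r3 : Ca (etaK {k0} u 1) = (1/p) * (μ (lowR k0 u ∩ Set.Icc 0 a)).toReal := by
        rw [hCa, Icc_single2]
        rfl
      have r4 : Cb (etaK {k0} u 1) = (1/p) * (μ (lowR k0 u ∩ Set.Icc b 1)).toReal := by
        rw [hCb, Icc_single2]
        rfl
      have r5 : Ca u
          = (1/p) * (μ ({w : Cube d | w k0 ≤ u k0} ∩ lowR k0 u ∩ Set.Icc 0 a)).toReal := by
        rw [hCa, low_decomp k0 u]
      have r6 : Cb u
          = (1/p) * (μ ({w : Cube d | w k0 ≤ u k0} ∩ lowR k0 u ∩ Set.Icc b 1)).toReal := by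
        rw [hCb, low_decomp k0 u]
      rw [r1, r2, r3, r4, r5, r6]
      apply arith1 p _ _ _ _ _ _ hp0
      apply abstract_ineq μ p hp0 _ _ _ _ ((lowR_meas k0 u).inter hBmeas) hpa hpb
      · by_cases hc : (u k0 : ℝ) < b k0
        · left
          apply Set.eq_empty_iff_forall_notMem.2
          rintro w ⟨h1, h2⟩
          have h3 : (b k0:ℝ) ≤ w k0 := Subtype.coe_le_coe.2 (h1.1 k0)
          have h4 : (w k0:ℝ) ≤ u k0 := Subtype.coe_le_coe.2 h2
          linarith
        · right
          intro w hw
          have h3 : (w k0:ℝ) ≤ a k0 := Subtype.coe_le_coe.2 (hw.2 k0)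
          have h4 : (a k0:ℝ) ≤ b k0 := Subtype.coe_le_coe.2 (hab k0)
          push_neg at hc
          exact Subtype.coe_le_coe.1 (by linarith : (w k0:ℝ) ≤ u k0)
      · by_cases hc : ∀ j ∈ Finset.univ.erase k0, (b j:ℝ) ≤ u j
        · right
          intro w hw
          apply Set.mem_iInter₂.2
          intro j hj
          have h3 : (w j:ℝ) ≤ a j := Subtype.coe_le_coe.2 (hw.2 j)
          have h4 : (a j:ℝ) ≤ b j := Subtype.coe_le_coe.2 (hab j)
          exact Subtype.coe_le_coe.1 (by linarith [hc j hj] : (w j:ℝ) ≤ u j)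
        · left
          push_neg at hc
          obtain ⟨j, hj, hjlt⟩ := hc
          apply Set.eq_empty_iff_forall_notMem.2
          rintro w ⟨h1, h2⟩
          have h3 : (b j:ℝ) ≤ w j := Subtype.coe_le_coe.2 (h1.1 j)
          have h4 : (w j:ℝ) ≤ u j := Subtype.coe_le_coe.2 (Set.mem_iInter₂.1 h2 j hj)
          linarith
    rw [hD]
    have h2p := mul_le_mul_of_nonneg_left hkey (by positivity : (0:ℝ) ≤ 2*p)
    linarith
  have hsurv : ∀ u : Cube d, survival D u ≤ survival C u := by
    intro u
    have hs1 : (fun k => unitInterval.symm (u k)) ≤ (1 : Cube d) :=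
      fun k => unitInterval.le_one'
    rw [nuK_univ_eq D u, nuK_univ_eq C u, SD' _ 1 hs1]
    set s : Cube d := fun k => unitInterval.symm (u k) with hsdef
    have he11 : etaK {k0} (1:Cube d) (1:Cube d) = (1:Cube d) := by
      funext j
      by_cases hj : j = k0 <;> simp [etaK, hj]
    rw [he11, hCa1, hCb1]
    rw [hCa (etaK {k0} 1 s), Icc_single1, hCb (etaK {k0} 1 s), Icc_single1]
    rw [boxT_decomp' k0 s 1]
    set X : Set (Cube d) :=
      {w : Cube d | w k0 ≤ (1:Cube d) k0} \ {w : Cube d | w k0 ≤ s k0} with hXdef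
    have hXeqA : Set.Icc (0:Cube d) a \ {w : Cube d | w k0 ≤ s k0} = X ∩ Set.Icc 0 a := by
      rw [hXdef]
      ext w
      constructor
      · rintro ⟨h1, h2⟩
        exact ⟨⟨by rw [Set.mem_setOf_eq, Pi.one_apply]; exact unitInterval.le_one', h2⟩, h1⟩
      · rintro ⟨⟨_, h2⟩, h1⟩
        exact ⟨h1, h2⟩
    have hXeqB : Set.Icc b (1:Cube d) \ {w : Cube d | w k0 ≤ s k0} = X ∩ Set.Icc b 1 := by
      rw [hXdef]
      ext w
      constructor
      · rintro ⟨h1, h2⟩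
        exact ⟨⟨by rw [Set.mem_setOf_eq, Pi.one_apply]; exact unitInterval.le_one', h2⟩, h1⟩
      · rintro ⟨⟨_, h2⟩, h1⟩
        exact ⟨h1, h2⟩
    have hsplitA : (μ (Set.Icc 0 a ∩ {w : Cube d | w k0 ≤ s k0})).toReal
        + (μ (X ∩ Set.Icc 0 a)).toReal = p := by
      have h := toReal_inter_add_diff μ (Set.Icc 0 a) {w : Cube d | w k0 ≤ s k0}
        (mLe k0 (s k0))
      rw [hXeqA] at h
      rw [h, hpa, ENNReal.toReal_ofReal hp0.le]
    have hsplitB : (μ (Set.Icc b 1 ∩ {w : Cube d | w k0 ≤ s k0})).toReal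
        + (μ (X ∩ Set.Icc b 1)).toReal = p := by
      have h := toReal_inter_add_diff μ (Set.Icc b 1) {w : Cube d | w k0 ≤ s k0}
        (mLe k0 (s k0))
      rw [hXeqB] at h
      rw [h, hpb, ENNReal.toReal_ofReal hp0.le]
    have hXcase : Set.Icc (0:Cube d) a ∩ X = ∅ ∨ Set.Icc b (1:Cube d) ⊆ X := by
      by_cases hc : (s k0 : ℝ) < b k0
      · right
        intro w hw
        refine ⟨by rw [Set.mem_setOf_eq, Pi.one_apply]; exact unitInterval.le_one', ?_⟩
        intro hcon
        have h3 : (b k0:ℝ) ≤ w k0 := Subtype.coe_le_coe.2 (hw.1 k0)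
        have h4 : (w k0:ℝ) ≤ s k0 := Subtype.coe_le_coe.2 hcon
        linarith
      · left
        apply Set.eq_empty_iff_forall_notMem.2
        rintro w ⟨h1, h2⟩
        push_neg at hc
        have h3 : (w k0:ℝ) ≤ a k0 := Subtype.coe_le_coe.2 (h1.2 k0)
        have h4 : (a k0:ℝ) ≤ b k0 := Subtype.coe_le_coe.2 (hab k0)
        exact h2.2 (Subtype.coe_le_coe.1 (by linarith : (w k0:ℝ) ≤ s k0))
    have hRcase : Set.Icc (0:Cube d) a ∩ boxR k0 s 1 = ∅ ∨
        Set.Icc b (1:Cube d) ⊆ boxR k0 s 1 := by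
      by_cases hc : ∀ j ∈ Finset.univ.erase k0, (s j:ℝ) < a j
      · right
        intro w hw
        apply Set.mem_iInter₂.2
        intro j hj
        refine ⟨by rw [Set.mem_setOf_eq, Pi.one_apply]; exact unitInterval.le_one', ?_⟩
        intro hcon
        have h3 : (b j:ℝ) ≤ w j := Subtype.coe_le_coe.2 (hw.1 j)
        have h4 : (a j:ℝ) ≤ b j := Subtype.coe_le_coe.2 (hab j)
        have h5 : (w j:ℝ) ≤ s j := Subtype.coe_le_coe.2 hcon
        linarith [hc j hj]
      · left
        push_neg at hc
        obtain ⟨j, hj, hjle⟩ := hc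
        apply Set.eq_empty_iff_forall_notMem.2
        rintro w ⟨h1, h2⟩
        have h3 : (w j:ℝ) ≤ a j := Subtype.coe_le_coe.2 (h1.2 j)
        have h4 := (Set.mem_iInter₂.1 h2 j hj).2
        exact h4 (Subtype.coe_le_coe.1 (by linarith : (w j:ℝ) ≤ s j))
    have habs := abstract_ineq μ p hp0 X (boxR k0 s 1) (Set.Icc b 1) (Set.Icc 0 a)
      ((boxR_meas k0 s 1).inter hAmeas) hpb hpa hXcase hRcase
    have hdiv := arith2 p _ _ hp0 habs
    have hswapA : μ ({w : Cube d | w k0 ≤ s k0} ∩ Set.Icc 0 a)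
        = μ (Set.Icc 0 a ∩ {w : Cube d | w k0 ≤ s k0}) := by rw [Set.inter_comm]
    have hswapB : μ ({w : Cube d | w k0 ≤ s k0} ∩ Set.Icc b 1)
        = μ (Set.Icc b 1 ∩ {w : Cube d | w k0 ≤ s k0}) := by rw [Set.inter_comm]
    have eA := arith3 p (μ ({w : Cube d | w k0 ≤ s k0} ∩ Set.Icc 0 a)).toReal
      (μ (X ∩ Set.Icc 0 a)).toReal hpne (by rw [hswapA]; exact hsplitA)
    have eB := arith3 p (μ ({w : Cube d | w k0 ≤ s k0} ∩ Set.Icc b 1)).toReal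
      (μ (X ∩ Set.Icc b 1)).toReal hpne (by rw [hswapB]; exact hsplitB)
    rw [eA, eB]
    linarith [hdiv]
  set j1 : Fin d := ⟨1, by omega⟩ with hj1def
  have hj1 : j1 ≠ k0 := Fin.ne_of_val_ne (by norm_num)
  have hUA : ENNReal.ofReal p ≤ μ {w : Cube d | ∀ k, (w k:ℝ) < a k} := by
    have hsub : Set.Icc (0:Cube d) a \ (⋃ k, {w : Cube d | w k = a k})
        ⊆ {w : Cube d | ∀ k, (w k:ℝ) < a k} := by
      rintro w ⟨h1, h2⟩
      intro k
      have h3 : (w k:ℝ) ≤ a k := Subtype.coe_le_coe.2 (h1.2 k)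
      rcases lt_or_eq_of_le h3 with h4 | h4
      · exact h4
      · exact absurd (Set.mem_iUnion.2 ⟨k, Subtype.coe_injective h4⟩) h2
    have hz : μ (⋃ k, {w : Cube d | w k = a k}) = 0 :=
      measure_iUnion_null fun k => hplane k (a k) (ha k).1
    calc ENNReal.ofReal p = μ (Set.Icc 0 a) := hpa.symm
      _ ≤ μ ((Set.Icc (0:Cube d) a \ (⋃ k, {w : Cube d | w k = a k}))
            ∪ (⋃ k, {w : Cube d | w k = a k})) := by
          apply measure_mono
          intro w hw
          by_cases h : w ∈ ⋃ k, {w : Cube d | w k = a k}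
          · exact Or.inr h
          · exact Or.inl ⟨hw, h⟩
      _ ≤ μ (Set.Icc (0:Cube d) a \ (⋃ k, {w : Cube d | w k = a k}))
            + μ (⋃ k, {w : Cube d | w k = a k}) := measure_union_le _ _
      _ = μ (Set.Icc (0:Cube d) a \ (⋃ k, {w : Cube d | w k = a k})) := by
          rw [hz, add_zero]
      _ ≤ μ {w : Cube d | ∀ k, (w k:ℝ) < a k} := measure_mono hsub
  have hun : ∀ (n : ℕ) (k : Fin d), (a k:ℝ) * ((n:ℝ)/((n:ℝ)+1)) ∈ Set.Icc (0:ℝ) 1 := by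
    intro n k
    have hd1 : (0:ℝ) ≤ (n:ℝ)/((n:ℝ)+1) := by positivity
    have hd2 : ((n:ℝ))/((n:ℝ)+1) ≤ 1 := by
      rw [div_le_one (by positivity)]
      linarith
    have h1 := (a k).2.1
    have h2 := (a k).2.2
    constructor
    · exact mul_nonneg h1 hd1
    · nlinarith
  set un : ℕ → Cube d := fun n k => ⟨(a k:ℝ) * ((n:ℝ)/((n:ℝ)+1)), hun n k⟩ with hundef
  have hcover : {w : Cube d | ∀ k, (w k:ℝ) < a k} ⊆ ⋃ n, Set.Icc 0 (un n) := by
    intro w hw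
    rw [Set.mem_setOf_eq] at hw
    have hne : ((Finset.univ : Finset (Fin d)).image fun k => (a k:ℝ) - w k).Nonempty :=
      Finset.Nonempty.image ⟨k0, Finset.mem_univ k0⟩ _
    set δ := Finset.min' _ hne with hδdef
    have hδpos : 0 < δ := by
      rw [hδdef]
      apply (Finset.lt_min'_iff _ _).2
      intro y hy
      obtain ⟨k, _, rfl⟩ := Finset.mem_image.1 hy
      linarith [hw k]
    obtain ⟨n, hn⟩ := exists_nat_one_div_lt hδpos
    apply Set.mem_iUnion.2 ⟨n, ?_⟩
    refine ⟨fun k => unitInterval.nonneg', fun k => ?_⟩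
    apply Subtype.coe_le_coe.1
    show (w k:ℝ) ≤ (a k:ℝ) * ((n:ℝ)/((n:ℝ)+1))
    have h1 : δ ≤ (a k:ℝ) - w k :=
      Finset.min'_le _ _ (Finset.mem_image_of_mem _ (Finset.mem_univ k))
    have h3 : (a k:ℝ) * ((n:ℝ)/((n:ℝ)+1)) = (a k:ℝ) - (a k:ℝ)*(1/((n:ℝ)+1)) := by
      field_simp
      ring
    have h4 : (a k:ℝ) * (1/((n:ℝ)+1)) ≤ 1/((n:ℝ)+1) :=
      mul_le_of_le_one_left (by positivity) (a k).2.2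
    rw [h3]
    linarith [hn]
  have hex : ∃ n, μ (Set.Icc 0 (un n)) ≠ 0 := by
    by_contra hcon
    push_neg at hcon
    have h1 : μ (⋃ n, Set.Icc 0 (un n)) = 0 := measure_iUnion_null hcon
    have h2 := le_trans hUA (measure_mono hcover)
    rw [h1] at h2
    exact (ne_of_gt (ENNReal.ofReal_pos.2 hp0)) (le_antisymm h2 zero_le)
  obtain ⟨n, hn0⟩ := hex
  set u0 : Cube d := un n with hu0def
  have hu0lt : ∀ k, (u0 k:ℝ) < a k := by
    intro k
    show (a k:ℝ) * ((n:ℝ)/((n:ℝ)+1)) < a k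
    have h1 : (n:ℝ)/((n:ℝ)+1) < 1 := by
      rw [div_lt_one (by positivity)]
      linarith
    calc (a k:ℝ) * ((n:ℝ)/((n:ℝ)+1)) < (a k:ℝ) * 1 :=
          mul_lt_mul_of_pos_left h1 (ha k).1
      _ = a k := mul_one _
  have hsubA : Set.Icc (0:Cube d) u0 ⊆ Set.Icc 0 a :=
    Set.Icc_subset_Icc_right (fun k => Subtype.coe_le_coe.1 (le_of_lt (hu0lt k)))
  have hCbu0 : Cb u0 = 0 := by
    rw [hCb]
    have hemp : Set.Icc (0:Cube d) u0 ∩ Set.Icc b 1 = ∅ := by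
      apply Set.eq_empty_iff_forall_notMem.2
      rintro w ⟨h1, h2⟩
      have h3 : (w k0:ℝ) ≤ u0 k0 := Subtype.coe_le_coe.2 (h1.2 k0)
      have h4 : (b k0:ℝ) ≤ w k0 := Subtype.coe_le_coe.2 (h2.1 k0)
      have h5 : (a k0:ℝ) ≤ b k0 := Subtype.coe_le_coe.2 (hab k0)
      linarith [hu0lt k0]
    rw [hemp]
    simp
  have hC2u0 : C2 u0 = 0 := by
    rw [hC2]
    have hz1 : Cb (etaK {k0} 1 u0) = 0 := by
      rw [hCb, Icc_single1]
      have hemp : {w : Cube d | w k0 ≤ u0 k0} ∩ Set.Icc b 1 = ∅ := by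
        apply Set.eq_empty_iff_forall_notMem.2
        rintro w ⟨h1, h2⟩
        have h3 : (w k0:ℝ) ≤ u0 k0 := Subtype.coe_le_coe.2 h1
        have h4 : (b k0:ℝ) ≤ w k0 := Subtype.coe_le_coe.2 (h2.1 k0)
        have h5 : (a k0:ℝ) ≤ b k0 := Subtype.coe_le_coe.2 (hab k0)
        linarith [hu0lt k0]
      rw [hemp]
      simp
    have hz2 : Cb (etaK {k0} u0 1) = 0 := by
      rw [hCb, Icc_single2]
      have hemp : (⋂ i ∈ Finset.univ.erase k0, {w : Cube d | w i ≤ u0 i})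
          ∩ Set.Icc b 1 = ∅ := by
        apply Set.eq_empty_iff_forall_notMem.2
        rintro w ⟨h1, h2⟩
        have hj1mem : j1 ∈ Finset.univ.erase k0 :=
          Finset.mem_erase.2 ⟨hj1, Finset.mem_univ _⟩
        have h3 : (w j1:ℝ) ≤ u0 j1 := Subtype.coe_le_coe.2 (Set.mem_iInter₂.1 h1 j1 hj1mem)
        have h4 : (b j1:ℝ) ≤ w j1 := Subtype.coe_le_coe.2 (h2.1 j1)
        have h5 : (a j1:ℝ) ≤ b j1 := Subtype.coe_le_coe.2 (hab j1)
        linarith [hu0lt j1]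
      rw [hemp]
      simp
    rw [hz1, hz2]
    ring
  have hCau0 : 0 < Ca u0 := by
    rw [hCa]
    have hIeq : Set.Icc (0:Cube d) u0 ∩ Set.Icc 0 a = Set.Icc 0 u0 :=
      Set.inter_eq_left.2 hsubA
    rw [hIeq]
    have hpos := ENNReal.toReal_pos hn0 (measure_ne_top μ _)
    positivity
  have hneq : D ≠ C := by
    intro heq
    have h1 := congrFun heq u0
    rw [hD, hC1, hCbu0, hC2u0] at h1
    nlinarith [mul_pos hp0 hCau0]
  exact ⟨hcopD, ⟨hptle, hsurv⟩, hneq, fun hmin => hneq (hmin.2 D hcopD ⟨hptle, hsurv⟩)⟩
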